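/- Under Assumption 1, for any initial distribution p₀ ∈ P(𝓜) and any mutant distribution q ∈ P(𝓜): if p*({M}) = 0, then (p_i)_{i≥0} converges in total variation to p*. -/
import Mathlib


open MeasureTheory Set Filter

/-- Selective advantage `s(x,u) = w(x,u) / ∫ w(y,u) u(dy)` if the mean fitness is
positive, and `1` otherwise. -/
noncomputable def sel (w : ℝ → MeasureTheory.Measure ℝ → ℝ)
    (u : MeasureTheory.Measure ℝ) (x : ℝ) : ℝ :=
  if 0 < ∫ y, w y u ∂u then w x u / ∫ y, w y u ∂u else 1

/-- The sequence of type distributions: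
`p_i(dx) = (1-β) s(x,p_{i-1}) p_{i-1}(dx) + β q(dx)`. -/
noncomputable def evol (w : ℝ → MeasureTheory.Measure ℝ → ℝ) (β : ℝ)
    (q p₀ : MeasureTheory.Measure ℝ) : ℕ → MeasureTheory.Measure ℝ
  | 0 => p₀
  | i + 1 =>
      ENNReal.ofReal (1 - β) •
          ((evol w β q p₀ i).withDensity fun x =>
            ENNReal.ofReal (sel w (evol w β q p₀ i) x))
        + ENNReal.ofReal β • q

/-- Convergence in total variation (uniform convergence over all measurable sets). -/
def TendstoTV (p : ℕ → MeasureTheory.Measure ℝ) (μ : MeasureTheory.Measure ℝ) : Prop :=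
  ∀ ε : ℝ, 0 < ε → ∃ N : ℕ, ∀ i ≥ N, ∀ A : Set ℝ, MeasurableSet A →
    |((p i) A).toReal - (μ A).toReal| < ε

/-- Weak convergence of measures (tested against bounded continuous functions). -/
def TendstoWeak (p : ℕ → MeasureTheory.Measure ℝ) (μ : MeasureTheory.Measure ℝ) : Prop :=
  ∀ f : BoundedContinuousFunction ℝ ℝ,
    Filter.Tendsto (fun i => ∫ x, f x ∂(p i)) Filter.atTop (nhds (∫ x, f x ∂μ))

/-- Assumption 1: if `v` restricted to `[0,M)` is a component of `u` restricted to `[0,M)`,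
then `s(·,u) ≥ s(·,v)` on `[0,M]`. -/
def Assumption1 (M : ℝ) (w : ℝ → MeasureTheory.Measure ℝ → ℝ) : Prop :=
  ∀ u v : MeasureTheory.Measure ℝ,
    IsProbabilityMeasure u → IsProbabilityMeasure v →
    u ((Set.Icc 0 M)ᶜ) = 0 → v ((Set.Icc 0 M)ᶜ) = 0 →
    v.restrict (Set.Ico 0 M) ≤ u.restrict (Set.Ico 0 M) →
    ∀ x ∈ Set.Icc (0:ℝ) M, sel w v x ≤ sel w u x

/-- Assumption 2: for every `0 ≤ a < M` and `0 < ε < 1` there is `c(a,ε) > 1` such that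
`s(M,u) ≥ c(a,ε) s(M,v)` whenever `v_{[0,M)} ≺ u_{[0,M)}` and `D_u(a) ≥ D_v(a) + ε`. -/
def Assumption2 (M : ℝ) (w : ℝ → MeasureTheory.Measure ℝ → ℝ) : Prop :=
  ∀ a : ℝ, 0 ≤ a → a < M → ∀ ε : ℝ, 0 < ε → ε < 1 → ∃ c : ℝ, 1 < c ∧
    ∀ u v : MeasureTheory.Measure ℝ,
      IsProbabilityMeasure u → IsProbabilityMeasure v →
      u ((Set.Icc 0 M)ᶜ) = 0 → v ((Set.Icc 0 M)ᶜ) = 0 →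
      v.restrict (Set.Ico 0 M) ≤ u.restrict (Set.Ico 0 M) →
      (v (Set.Icc 0 a)).toReal + ε ≤ (u (Set.Icc 0 a)).toReal →
      c * sel w v M ≤ sel w u M

section Stmt8Aux

lemma sel_nonneg (w : ℝ → Measure ℝ → ℝ) (hw : ∀ x u, 0 ≤ w x u) (u : Measure ℝ) (x : ℝ) :
    0 ≤ sel w u x := by
  unfold sel; split_ifs with h
  · exact div_nonneg (hw x u) h.le
  · exact zero_le_one

lemma sel_meas (w : ℝ → Measure ℝ → ℝ) (hw : ∀ u, Measurable fun x => w x u) (u : Measure ℝ) :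
    Measurable (sel w u) := by
  unfold sel; split_ifs with h
  · exact (hw u).div_const _
  · exact measurable_const

lemma lintegral_sel (w : ℝ → Measure ℝ → ℝ) (hw : ∀ x u, 0 ≤ w x u)
    (u : Measure ℝ) [IsProbabilityMeasure u] :
    ∫⁻ x, ENNReal.ofReal (sel w u x) ∂u = 1 := by
  by_cases h : 0 < ∫ y, w y u ∂u
  · have hInt : Integrable (fun y => w y u) u := by
      by_contra hI
      rw [integral_undef hI] at h; exact lt_irrefl 0 h
    simp only [sel, if_pos h]
    rw [← MeasureTheory.ofReal_integral_eq_lintegral_ofReal (hInt.div_const _)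
      (Filter.Eventually.of_forall fun y => div_nonneg (hw y u) h.le)]
    rw [integral_div, div_self h.ne', ENNReal.ofReal_one]
  · simp only [sel, if_neg h]
    simp


variable {M β : ℝ} {w : ℝ → Measure ℝ → ℝ} {q p₀ : Measure ℝ}

lemma evol_outer (hM : 0 ≤ M) (hq : q ((Icc 0 M)ᶜ) = 0) (hp₀ : p₀ ((Icc 0 M)ᶜ) = 0) :
    ∀ i, evol w β q p₀ i ((Icc 0 M)ᶜ) = 0
  | 0 => hp₀
  | (i + 1) => by
    have ih := evol_outer hM hq hp₀ i
    show (ENNReal.ofReal (1 - β) • _ + ENNReal.ofReal β • q) ((Icc 0 M)ᶜ) = 0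
    rw [Measure.add_apply, Measure.smul_apply, Measure.smul_apply,
      withDensity_apply _ measurableSet_Icc.compl, setLIntegral_measure_zero _ _ ih, hq]
    simp

lemma evol_prob (hβ : β ∈ Set.Ioo (0:ℝ) 1) (hw : ∀ x u, 0 ≤ w x u)
    [IsProbabilityMeasure q] [IsProbabilityMeasure p₀] :
    ∀ i, IsProbabilityMeasure (evol w β q p₀ i)
  | 0 => inferInstanceAs (IsProbabilityMeasure p₀)
  | (i + 1) => by
    haveI ih := evol_prob hβ hw i
    constructor
    show (ENNReal.ofReal (1 - β) • _ + ENNReal.ofReal β • q) univ = 1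
    rw [Measure.add_apply, Measure.smul_apply, Measure.smul_apply, smul_eq_mul, smul_eq_mul,
      withDensity_apply _ MeasurableSet.univ, Measure.restrict_univ,
      lintegral_sel w hw _, measure_univ, mul_one, mul_one,
      ← ENNReal.ofReal_add (by linarith [hβ.2]) (le_of_lt hβ.1)]
    norm_num

lemma evol_mono (hM : 0 ≤ M) (hβ : β ∈ Set.Ioo (0:ℝ) 1)
    (hw : ∀ x u, 0 ≤ w x u) (hwm : ∀ u, Measurable fun x => w x u)
    (hA1 : Assumption1 M w)
    [IsProbabilityMeasure q] [IsProbabilityMeasure p₀]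
    (hq : q ((Icc 0 M)ᶜ) = 0) (hp₀ : p₀ ((Icc 0 M)ᶜ) = 0) :
    ∀ i, (evol w β q (Measure.dirac M) i).restrict (Ico 0 M) ≤
      (evol w β q p₀ i).restrict (Ico 0 M)
  | 0 => by
    have h0 : (Measure.dirac M).restrict (Ico 0 M) = 0 := by
      rw [Measure.restrict_eq_zero, Measure.dirac_apply' _ measurableSet_Ico]
      simp
    show (Measure.dirac M).restrict (Ico 0 M) ≤ _
    rw [h0]; exact Measure.zero_le _
  | (i + 1) => by
    have hdq : (Measure.dirac M) ((Icc 0 M)ᶜ) = 0 := by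
      rw [Measure.dirac_apply' _ measurableSet_Icc.compl]
      simp [hM]
    have ih := evol_mono hM hβ hw hwm hA1 hq hp₀ i
    set v := evol w β q (Measure.dirac M) i with hv
    set u := evol w β q p₀ i with hu
    haveI : IsProbabilityMeasure u := evol_prob hβ hw i
    haveI : IsProbabilityMeasure v := evol_prob hβ hw i
    have hvo : v ((Icc 0 M)ᶜ) = 0 := evol_outer hM hq hdq i
    have huo : u ((Icc 0 M)ᶜ) = 0 := evol_outer hM hq hp₀ i
    have hsel : ∀ x ∈ Icc (0:ℝ) M, sel w v x ≤ sel w u x :=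
      hA1 u v ‹_› ‹_› huo hvo ih
    rw [Measure.le_iff]
    intro B hB
    show ((ENNReal.ofReal (1 - β) • v.withDensity _ + ENNReal.ofReal β • q).restrict _) B ≤
      ((ENNReal.ofReal (1 - β) • u.withDensity _ + ENNReal.ofReal β • q).restrict _) B
    rw [Measure.restrict_apply hB, Measure.restrict_apply hB]
    simp only [Measure.add_apply, Measure.smul_apply, smul_eq_mul]
    have hBS : MeasurableSet (B ∩ Ico 0 M) := hB.inter measurableSet_Ico
    refine add_le_add (mul_le_mul_right ?_ _) le_rfl
    rw [withDensity_apply _ hBS, withDensity_apply _ hBS]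
    calc ∫⁻ x in B ∩ Ico 0 M, ENNReal.ofReal (sel w v x) ∂v
        ≤ ∫⁻ x in B ∩ Ico 0 M, ENNReal.ofReal (sel w u x) ∂v := by
          refine setLIntegral_mono ((sel_meas w hwm u).ennreal_ofReal) ?_
          intro x hx
          exact ENNReal.ofReal_le_ofReal (hsel x ⟨hx.2.1, hx.2.2.le⟩)
      _ = ∫⁻ x, ENNReal.ofReal (sel w u x) ∂((v.restrict (Ico 0 M)).restrict B) := by
          rw [Measure.restrict_restrict hB, inter_comm]
      _ ≤ ∫⁻ x, ENNReal.ofReal (sel w u x) ∂((u.restrict (Ico 0 M)).restrict B) :=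
          lintegral_mono' (Measure.restrict_mono subset_rfl ih) le_rfl
      _ = ∫⁻ x in B ∩ Ico 0 M, ENNReal.ofReal (sel w u x) ∂u := by
          rw [Measure.restrict_restrict hB, inter_comm]

lemma meas_split (hM : 0 < M) (μ : Measure ℝ) [IsFiniteMeasure μ]
    (hμ : μ ((Icc 0 M)ᶜ) = 0) (B : Set ℝ) (hB : MeasurableSet B) :
    (μ B).toReal = (μ (B ∩ Ico 0 M)).toReal + (μ (B ∩ {M})).toReal := by
  have h1 : μ B = μ (B ∩ Icc 0 M) := by
    have h0 : μ (B \ Icc 0 M) = 0 :=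
      measure_mono_null (diff_subset_compl _ _) hμ
    rw [← measure_inter_add_diff B measurableSet_Icc, h0, add_zero]
  have h2 : B ∩ Icc 0 M = (B ∩ Ico 0 M) ∪ (B ∩ {M}) := by
    rw [← Ico_union_right hM.le, inter_union_distrib_left]
  have hdisj : Disjoint (B ∩ Ico 0 M) (B ∩ {M}) := by
    refine Disjoint.mono inter_subset_right inter_subset_right ?_
    rw [disjoint_left]
    rintro a ha rfl
    exact lt_irrefl _ ha.2
  rw [h1, h2, measure_union hdisj (hB.inter (measurableSet_singleton M)),
    ENNReal.toReal_add (measure_ne_top _ _) (measure_ne_top _ _)]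

lemma tv_bound (hM : 0 < M) (μ ν : Measure ℝ)
    [IsProbabilityMeasure μ] [IsProbabilityMeasure ν]
    (hμ : μ ((Icc 0 M)ᶜ) = 0) (hν : ν ((Icc 0 M)ᶜ) = 0)
    (hle : ν.restrict (Ico 0 M) ≤ μ.restrict (Ico 0 M))
    (A : Set ℝ) (hA : MeasurableSet A) :
    |(μ A).toReal - (ν A).toReal| ≤ (ν ({M} : Set ℝ)).toReal := by
  set S := Ico (0:ℝ) M with hS
  have h1 : ∀ B : Set ℝ, MeasurableSet B → (ν (B ∩ S)).toReal ≤ (μ (B ∩ S)).toReal := by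
    intro B hB
    have h := Measure.le_iff'.mp hle B
    rw [Measure.restrict_apply' measurableSet_Ico, Measure.restrict_apply' measurableSet_Ico] at h
    exact ENNReal.toReal_mono (measure_ne_top _ _) h
  have hSsplit : ∀ (mm : Measure ℝ), IsProbabilityMeasure mm →
      (mm S).toReal = (mm (A ∩ S)).toReal + (mm (Aᶜ ∩ S)).toReal := by
    intro mm _
    have hd : Disjoint (A ∩ S) (Aᶜ ∩ S) :=
      disjoint_compl_right.mono inter_subset_left inter_subset_left
    have hU : (A ∩ S) ∪ (Aᶜ ∩ S) = S := by
      rw [← union_inter_distrib_right, union_compl_self, univ_inter]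
    have hmu := measure_union hd (hA.compl.inter measurableSet_Ico) (μ := mm)
    rw [hU] at hmu
    rw [hmu, ENNReal.toReal_add (measure_ne_top _ _) (measure_ne_top _ _)]
  have hμA := meas_split hM μ hμ A hA
  have hνA := meas_split hM ν hν A hA
  have hμU := meas_split hM μ hμ univ MeasurableSet.univ
  have hνU := meas_split hM ν hν univ MeasurableSet.univ
  rw [univ_inter, univ_inter, measure_univ, ENNReal.toReal_one] at hμU hνU
  have hμS := hSsplit μ inferInstance
  have hνS := hSsplit ν inferInstance
  have ha := h1 A hA
  have hb := h1 Aᶜ hA.compl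
  have hm : (0:ℝ) ≤ (μ ({M}:Set ℝ)).toReal := ENNReal.toReal_nonneg
  have hm' : (0:ℝ) ≤ (ν ({M}:Set ℝ)).toReal := ENNReal.toReal_nonneg
  by_cases hMA : M ∈ A
  · have : A ∩ {M} = ({M} : Set ℝ) := inter_eq_self_of_subset_right (singleton_subset_iff.mpr hMA)
    rw [this] at hμA hνA
    rw [abs_le]; constructor <;> linarith
  · have : A ∩ {M} = (∅ : Set ℝ) := by
      ext x; simp only [mem_inter_iff, mem_singleton_iff, mem_empty_iff_false, iff_false]
      rintro ⟨hx, rfl⟩; exact hMA hx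
    rw [this] at hμA hνA
    simp only [measure_empty, ENNReal.toReal_zero, add_zero] at hμA hνA
    rw [abs_le]; constructor <;> linarith

end Stmt8Aux

/-- Corollary "nomass" of the paper. Under Assumption 1, for any `p₀`, `q`:
if `p*({M}) = 0`, then `(p_i)` converges in total variation to `p*`. -/
theorem stmt8 (M : ℝ) (hM : 0 < M) (β : ℝ) (hβ : β ∈ Set.Ioo (0:ℝ) 1)
    (q : MeasureTheory.Measure ℝ) [IsProbabilityMeasure q] (hq : q ((Set.Icc 0 M)ᶜ) = 0)
    (w : ℝ → MeasureTheory.Measure ℝ → ℝ)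
    (hw_nonneg : ∀ x u, 0 ≤ w x u)
    (hw_meas : ∀ u, Measurable fun x => w x u)
    (hA1 : Assumption1 M w)
    (pstar : MeasureTheory.Measure ℝ) [IsProbabilityMeasure pstar]
    (hpstar : TendstoTV (evol w β q (MeasureTheory.Measure.dirac M)) pstar)
    (p₀ : MeasureTheory.Measure ℝ) [IsProbabilityMeasure p₀]
    (hp₀ : p₀ ((Set.Icc 0 M)ᶜ) = 0)
    (hM0 : pstar ({M} : Set ℝ) = 0) :
    TendstoTV (evol w β q p₀) pstar := by
  intro ε hε
  obtain ⟨N, hN⟩ := hpstar (ε/2) (by linarith)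
  refine ⟨N, fun i hi A hA => ?_⟩
  haveI : IsProbabilityMeasure (evol w β q p₀ i) := evol_prob hβ hw_nonneg i
  haveI : IsProbabilityMeasure (evol w β q (MeasureTheory.Measure.dirac M) i) :=
    evol_prob hβ hw_nonneg i
  have hdq : (MeasureTheory.Measure.dirac M) ((Icc 0 M)ᶜ) = 0 := by
    rw [Measure.dirac_apply' _ measurableSet_Icc.compl]; simp [hM.le]
  have hMhat : ((evol w β q (MeasureTheory.Measure.dirac M) i) ({M} : Set ℝ)).toReal < ε/2 := by
    have h := hN i hi {M} (measurableSet_singleton M)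
    rw [hM0] at h
    simpa [abs_of_nonneg ENNReal.toReal_nonneg] using h
  have htv := tv_bound hM (evol w β q p₀ i) (evol w β q (MeasureTheory.Measure.dirac M) i)
    (evol_outer hM.le hq hp₀ i) (evol_outer hM.le hq hdq i)
    (evol_mono hM.le hβ hw_nonneg hw_meas hA1 hq hp₀ i) A hA
  have h2 := hN i hi A hA
  calc |((evol w β q p₀ i) A).toReal - (pstar A).toReal|
      ≤ |((evol w β q p₀ i) A).toReal
          - ((evol w β q (MeasureTheory.Measure.dirac M) i) A).toReal|
        + |((evol w β q (MeasureTheory.Measure.dirac M) i) A).toReal - (pstar A).toReal| :=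
        abs_sub_le _ _ _
    _ < ε := by linarith
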